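/- For 0 ≤ i ≤ d, the following four equalities of subspaces hold: U_i = exp_q((a⁻¹/(q − q⁻¹))ψ)(W_i), U_i^↓ = exp_q((a/(q − q⁻¹))ψ)(W_i), W_i = exp_{q⁻¹}(−(a⁻¹/(q − q⁻¹))ψ)(U_i), and W_i = exp_{q⁻¹}(−(a/(q − q⁻¹))ψ)(U_i^↓), where each right-hand side denotes the image of the subspace under the indicated map. -/

import Mathlib

noncomputable def qNum {𝕂 : Type*} [Field 𝕂] (q : 𝕂) (n : ℕ) : 𝕂 :=
  (q ^ n - q⁻¹ ^ n) / (q - q⁻¹)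

noncomputable def qFact {𝕂 : Type*} [Field 𝕂] (q : 𝕂) (n : ℕ) : 𝕂 :=
  ∏ j ∈ Finset.range n, qNum q (j + 1)

noncomputable def qExp {𝕂 : Type*} [Field 𝕂] {V : Type*} [AddCommGroup V] [Module 𝕂 V]
    (q : 𝕂) (N : ℕ) (T : Module.End 𝕂 V) : Module.End 𝕂 V :=
  ∑ n ∈ Finset.range N, (q ^ (n * (n - 1) / 2) / qFact q n) • T ^ n

noncomputable def qExpInv {𝕂 : Type*} [Field 𝕂] {V : Type*} [AddCommGroup V] [Module 𝕂 V]
    (q : 𝕂) (N : ℕ) (T : Module.End 𝕂 V) : Module.End 𝕂 V :=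
  ∑ n ∈ Finset.range N, (q⁻¹ ^ (n * (n - 1) / 2) / qFact q n) • T ^ n

section AuxScalar
variable {𝕂 : Type*} [Field 𝕂]

lemma aux_eps_ne {q : 𝕂} (hq : q ≠ 0) {d : ℕ} (hd : 1 ≤ d)
    (hq2 : ∀ i : ℕ, 1 ≤ i → i ≤ d → q ^ (2 * i) ≠ 1) :
    q - q⁻¹ ≠ 0 := by
  intro h
  apply hq2 1 le_rfl hd
  have hqq : q = q⁻¹ := sub_eq_zero.mp h
  calc q ^ (2 * 1) = q * q := by ring
    _ = q * q⁻¹ := by rw [← hqq]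
    _ = 1 := mul_inv_cancel₀ hq

lemma aux_qNum_ne {q : 𝕂} (hq : q ≠ 0) {d n : ℕ}
    (hq2 : ∀ i : ℕ, 1 ≤ i → i ≤ d → q ^ (2 * i) ≠ 1) (h1 : 1 ≤ n) (hn : n ≤ d) :
    qNum q n ≠ 0 := by
  have hden : q - q⁻¹ ≠ 0 := aux_eps_ne hq (le_trans h1 hn) hq2
  have hnum : q ^ n - q⁻¹ ^ n ≠ 0 := by
    intro h
    apply hq2 n h1 hn
    have hqn : q ^ n = q⁻¹ ^ n := sub_eq_zero.mp h
    calc q ^ (2 * n) = q ^ n * q ^ n := by rw [two_mul, pow_add]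
      _ = q ^ n * q⁻¹ ^ n := by rw [← hqn]
      _ = (q * q⁻¹) ^ n := (mul_pow q q⁻¹ n).symm
      _ = 1 := by rw [mul_inv_cancel₀ hq, one_pow]
  exact div_ne_zero hnum hden

lemma aux_qFact_ne {q : 𝕂} (hq : q ≠ 0) {d n : ℕ}
    (hq2 : ∀ i : ℕ, 1 ≤ i → i ≤ d → q ^ (2 * i) ≠ 1) (hn : n ≤ d) :
    qFact q n ≠ 0 := by
  unfold qFact
  rw [Finset.prod_ne_zero_iff]
  intro j hj
  exact aux_qNum_ne hq hq2 (Nat.le_add_left 1 j) (by simp at hj; omega)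

lemma aux_core {q : 𝕂} (hq : q ≠ 0) (heps : q - q⁻¹ ≠ 0) (m : ℕ) :
    (q - q⁻¹) * qNum q (m+1) * q ^ (m+1) = q ^ (2*(m+1)) - 1 := by
  unfold qNum
  rw [mul_div_cancel₀ _ heps, sub_mul]
  congr 1
  · rw [← pow_add]; congr 1; ring
  · rw [← mul_pow, inv_mul_cancel₀ hq, one_pow]

lemma aux_exp_succ (m : ℕ) : (m+1) * ((m+1) - 1) / 2 = m * (m - 1) / 2 + m := by
  have h1 : (m+1) - 1 = m := rfl
  rw [h1]
  have h2 : (m+1) * m = m * (m-1) + 2 * m := by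
    cases m with
    | zero => rfl
    | succ k => simp [Nat.succ_sub_one]; ring
  rw [h2, Nat.add_mul_div_left _ _ (by norm_num : 0 < 2)]

lemma aux_coefE {q : 𝕂} (hq : q ≠ 0) (heps : q - q⁻¹ ≠ 0) {m : ℕ}
    (hFm : qFact q m ≠ 0) (hNm : qNum q (m+1) ≠ 0) (x : 𝕂) :
    (q ^ ((m+1) * ((m+1) - 1) / 2) / qFact q (m+1)) * (q^2*x) ^ (m+1)
      - ((q - q⁻¹) * q * x) * ((q ^ (m * (m - 1) / 2) / qFact q m) * (q^2*x) ^ m)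
      = (q ^ ((m+1) * ((m+1) - 1) / 2) / qFact q (m+1)) * x ^ (m+1) := by
  have hF : qFact q (m+1) = qFact q m * qNum q (m+1) := Finset.prod_range_succ _ _
  have hcore := aux_core hq heps m
  have hcore2 : qNum q (m+1) * (q*q - 1) * q ^ m = q ^ (2*(m+1)) - 1 := by
    linear_combination hcore + qNum q (m+1) * q ^ m * inv_mul_cancel₀ hq
  rw [hF, aux_exp_succ m, pow_add]
  field_simp
  linear_combination (-(q ^ m) * x ^ (m+1)) * hcore2

lemma aux_coefI {q : 𝕂} (hq : q ≠ 0) (heps : q - q⁻¹ ≠ 0) {m : ℕ}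
    (hFm : qFact q m ≠ 0) (hNm : qNum q (m+1) ≠ 0) (x : 𝕂) :
    (q⁻¹ ^ ((m+1) * ((m+1) - 1) / 2) / qFact q (m+1)) * (-x) ^ (m+1)
      - ((q - q⁻¹) * q * x) * ((q⁻¹ ^ (m * (m - 1) / 2) / qFact q m) * (-x) ^ m)
      = (q⁻¹ ^ ((m+1) * ((m+1) - 1) / 2) / qFact q (m+1)) * (-(q^2*x)) ^ (m+1) := by
  have hF : qFact q (m+1) = qFact q m * qNum q (m+1) := Finset.prod_range_succ _ _
  have hcore := aux_core hq heps m
  have hcore2 : qNum q (m+1) * (q*q - 1) * q ^ m = q ^ (2*(m+1)) - 1 := by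
    linear_combination hcore + qNum q (m+1) * q ^ m * inv_mul_cancel₀ hq
  rw [hF, aux_exp_succ m, pow_add]
  field_simp
  have hqm : (1/q)^m * q^m = 1 := by rw [← mul_pow, one_div, inv_mul_cancel₀ hq, one_pow]
  linear_combination ((-x)^(m+1) * (1/q)^m) * hcore2 + (-(qNum q (m+1)) * (q^2-1) * (-x)^(m+1)) * hqm

end AuxScalar

section AuxOp
variable {𝕂 : Type*} [Field 𝕂] {V : Type*} [AddCommGroup V] [Module 𝕂 V]

lemma aux_family_eq {ι : Type*} (p W : ι → Submodule 𝕂 V)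
    (h1 : iSupIndep p) (h2 : ∀ j, W j ≤ p j) (h3 : (⨆ j, W j) = ⊤) (j : ι) :
    W j = p j := by
  refine le_antisymm (h2 j) ?_
  have hsup : (⨆ i, W i) ≤ W j ⊔ ⨆ i, ⨆ _ : i ≠ j, W i := by
    refine iSup_le fun i => ?_
    rcases eq_or_ne i j with rfl | hij
    · exact le_sup_left
    · exact le_sup_of_le_right (le_iSup_of_le i (le_iSup_of_le hij le_rfl))
  have hd : p j ⊓ (⨆ i, ⨆ _ : i ≠ j, W i) = ⊥ := by
    refine le_bot_iff.mp (le_trans (inf_le_inf_left _ ?_) (h1 j).le_bot)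
    exact iSup_mono fun i => iSup_mono fun hij => h2 i
  calc p j = p j ⊓ ⨆ i, W i := by rw [h3, inf_top_eq]
    _ ≤ p j ⊓ (W j ⊔ ⨆ i, ⨆ _ : i ≠ j, W i) := inf_le_inf_left _ hsup
    _ = p j ⊓ (⨆ i, ⨆ _ : i ≠ j, W i) ⊔ W j := by
        rw [sup_comm (W j) _, ← inf_sup_assoc_of_le _ (h2 j)]
    _ ≤ ⊥ ⊔ W j := by rw [hd]
    _ = W j := bot_sup_eq _

lemma aux_comm_inverse {R : Type*} [Ring R] {x u : R} (hu : IsUnit u) (h : x * u = u * x) :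
    x * Ring.inverse u = Ring.inverse u * x := by
  have h2 : Ring.inverse u * u = 1 := Ring.inverse_mul_cancel u hu
  have h3 : u * Ring.inverse u = 1 := Ring.mul_inverse_cancel u hu
  calc x * Ring.inverse u = Ring.inverse u * u * (x * Ring.inverse u) := by rw [h2, one_mul]
    _ = Ring.inverse u * (x * u) * Ring.inverse u := by
        rw [mul_assoc (Ring.inverse u), ← mul_assoc u, ← h, mul_assoc, mul_assoc, mul_assoc]
    _ = Ring.inverse u * x * (u * Ring.inverse u) := by rw [mul_assoc, mul_assoc, mul_assoc]
    _ = Ring.inverse u * x := by rw [h3, mul_one]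

lemma aux_mul_sum (d : ℕ) (ψ : Module.End 𝕂 V) (hψnil : ψ ^ (d+1) = 0)
    (s : 𝕂) (f : ℕ → 𝕂) :
    (1 - s • ψ) * (∑ n ∈ Finset.range (d+1), f n • ψ ^ n)
      = ∑ n ∈ Finset.range (d+1),
          (f n - s * (if n = 0 then 0 else f (n-1))) • ψ ^ n := by
  have step1 : (s • ψ) * (∑ n ∈ Finset.range (d+1), f n • ψ ^ n)
      = ∑ n ∈ Finset.range (d+1), (s * (if n = 0 then 0 else f (n-1))) • ψ ^ n := by
    rw [Finset.mul_sum]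
    rw [Finset.sum_range_succ' (fun n => (s * (if n = 0 then 0 else f (n-1))) • ψ ^ n) d]
    simp only [if_pos rfl, mul_zero, zero_smul, add_zero]
    rw [Finset.sum_range_succ (fun n => (s • ψ) * (f n • ψ ^ n)) d]
    have hlast : (s • ψ) * (f d • ψ ^ d) = 0 := by
      rw [smul_mul_assoc, mul_smul_comm, ← pow_succ', hψnil]; simp
    rw [hlast]
    rw [add_zero]
    simp only [if_true, mul_zero, zero_smul, add_zero]
    refine Finset.sum_congr rfl fun n _ => ?_
    simp only [Nat.add_sub_cancel, if_neg (Nat.succ_ne_zero n)]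
    rw [smul_mul_assoc, mul_smul_comm, ← pow_succ', smul_smul]
  rw [sub_mul, one_mul, step1, ← Finset.sum_sub_distrib]
  exact Finset.sum_congr rfl fun n _ => (sub_smul _ _ _).symm

lemma aux_T_pow (ψ T : Module.End 𝕂 V) (q2 : 𝕂) (hTψ : T * ψ = q2 • (ψ * T)) :
    ∀ n : ℕ, T * ψ ^ n = q2 ^ n • (ψ ^ n * T) := by
  intro n
  induction n with
  | zero => simp
  | succ n ih =>
    rw [pow_succ, ← mul_assoc, ih, smul_mul_assoc, mul_assoc, hTψ, pow_succ]
    rw [mul_smul_comm, smul_smul, ← mul_assoc]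

lemma aux_T_mul_sum (d : ℕ) (ψ T : Module.End 𝕂 V) (q2 : 𝕂)
    (hTψ : T * ψ = q2 • (ψ * T)) (f : ℕ → 𝕂) :
    T * (∑ n ∈ Finset.range (d+1), f n • ψ ^ n)
      = (∑ n ∈ Finset.range (d+1), (f n * q2 ^ n) • ψ ^ n) * T := by
  rw [Finset.mul_sum, Finset.sum_mul]
  refine Finset.sum_congr rfl fun n _ => ?_
  rw [mul_smul_comm, aux_T_pow ψ T q2 hTψ n, smul_smul, smul_mul_assoc]

lemma aux_commute_sum (ψ : Module.End 𝕂 V) (N : ℕ) (f : ℕ → 𝕂) :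
    Commute ψ (∑ n ∈ Finset.range N, f n • ψ ^ n) :=
  Commute.sum_right _ _ _ fun n _ => ((Commute.refl ψ).pow_right n).smul_right _

lemma aux_sum_unit (d : ℕ) (ψ : Module.End 𝕂 V) (hψnil : ψ ^ (d+1) = 0)
    (f : ℕ → 𝕂) (hf0 : f 0 = 1) :
    IsUnit (∑ n ∈ Finset.range (d+1), f n • ψ ^ n) := by
  rw [Finset.sum_range_succ' (fun n => f n • ψ ^ n) d]
  have hrep : ∑ n ∈ Finset.range d, f (n+1) • ψ ^ (n+1)
      = ψ * ∑ n ∈ Finset.range d, f (n+1) • ψ ^ n := by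
    rw [Finset.mul_sum]
    exact Finset.sum_congr rfl fun n _ => by rw [mul_smul_comm, ← pow_succ']
  rw [hrep, hf0, pow_zero, one_smul]
  have hc : Commute ψ (∑ n ∈ Finset.range d, f (n+1) • ψ ^ n) := aux_commute_sum ψ d _
  have hnil : IsNilpotent (ψ * ∑ n ∈ Finset.range d, f (n+1) • ψ ^ n) :=
    ⟨d+1, by rw [hc.mul_pow, hψnil, zero_mul]⟩
  exact hnil.isUnit_add_one

lemma aux_qExp_eq (q : 𝕂) (N : ℕ) (x : 𝕂) (ψ : Module.End 𝕂 V) :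
    qExp q N (x • ψ)
      = ∑ n ∈ Finset.range N, ((q ^ (n*(n-1)/2) / qFact q n) * x ^ n) • ψ ^ n := by
  unfold qExp
  exact Finset.sum_congr rfl fun n _ => by rw [smul_pow, smul_smul]

lemma aux_qExpInv_eq (q : 𝕂) (N : ℕ) (x : 𝕂) (ψ : Module.End 𝕂 V) :
    qExpInv q N (-(x • ψ))
      = ∑ n ∈ Finset.range N, ((q⁻¹ ^ (n*(n-1)/2) / qFact q n) * (-x) ^ n) • ψ ^ n := by
  unfold qExpInv
  refine Finset.sum_congr rfl fun n _ => ?_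
  rw [← neg_smul, smul_pow, smul_smul]

lemma aux_qExp_unit {d : ℕ} (q : 𝕂) (x : 𝕂) (ψ : Module.End 𝕂 V) (hψnil : ψ ^ (d+1) = 0) :
    IsUnit (qExp q (d+1) (x • ψ)) := by
  rw [aux_qExp_eq]
  exact aux_sum_unit d ψ hψnil _ (by simp [qFact])

lemma aux_qExpInv_unit {d : ℕ} (q : 𝕂) (x : 𝕂) (ψ : Module.End 𝕂 V) (hψnil : ψ ^ (d+1) = 0) :
    IsUnit (qExpInv q (d+1) (-(x • ψ))) := by
  rw [aux_qExpInv_eq]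
  exact aux_sum_unit d ψ hψnil _ (by simp [qFact])

lemma aux_conj {d : ℕ} (hd : 1 ≤ d) {q : 𝕂} (hq : q ≠ 0)
    (hq2 : ∀ i : ℕ, 1 ≤ i → i ≤ d → q ^ (2 * i) ≠ 1)
    (ψ T : Module.End 𝕂 V) (hψnil : ψ ^ (d+1) = 0)
    (hTψ : T * ψ = q ^ 2 • (ψ * T))
    (hinv : ∀ y : 𝕂, IsUnit (1 - y • ψ)) (x : 𝕂) :
    T * qExp q (d+1) (x • ψ)
        = qExp q (d+1) (x • ψ) * (Ring.inverse (1 - ((q - q⁻¹) * q * x) • ψ) * T)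
    ∧ (Ring.inverse (1 - ((q - q⁻¹) * q * x) • ψ) * T) * qExpInv q (d+1) (-(x • ψ))
        = qExpInv q (d+1) (-(x • ψ)) * T := by
  have heps : q - q⁻¹ ≠ 0 := aux_eps_ne hq hd hq2
  set s : 𝕂 := (q - q⁻¹) * q * x with hs
  set u : Module.End 𝕂 V := 1 - s • ψ with hu
  have huunit : IsUnit u := hinv s
  have hiu : Ring.inverse u * u = 1 := Ring.inverse_mul_cancel u huunit
  -- coefficient functions
  set fE : ℕ → 𝕂 := fun n => (q ^ (n*(n-1)/2) / qFact q n) * x ^ n with hfE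
  set fE2 : ℕ → 𝕂 := fun n => (q ^ (n*(n-1)/2) / qFact q n) * (q^2*x) ^ n with hfE2
  set fI : ℕ → 𝕂 := fun n => (q⁻¹ ^ (n*(n-1)/2) / qFact q n) * (-x) ^ n with hfI
  set fI2 : ℕ → 𝕂 := fun n => (q⁻¹ ^ (n*(n-1)/2) / qFact q n) * (-(q^2*x)) ^ n with hfI2
  have hEeq : qExp q (d+1) (x • ψ) = ∑ n ∈ Finset.range (d+1), fE n • ψ ^ n :=
    aux_qExp_eq q (d+1) x ψ
  have hFeq : qExpInv q (d+1) (-(x • ψ)) = ∑ n ∈ Finset.range (d+1), fI n • ψ ^ n :=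
    aux_qExpInv_eq q (d+1) x ψ
  -- (1 - s ψ) * E2 = E
  have h1 : u * (∑ n ∈ Finset.range (d+1), fE2 n • ψ ^ n)
      = ∑ n ∈ Finset.range (d+1), fE n • ψ ^ n := by
    rw [hu, aux_mul_sum d ψ hψnil s fE2]
    refine Finset.sum_congr rfl fun n hn => ?_
    congr 1
    cases n with
    | zero => simp [hfE2, hfE]
    | succ m =>
      simp only [if_neg (Nat.succ_ne_zero m), Nat.add_sub_cancel]
      have hm : m ≤ d := by
        have := Finset.mem_range.mp hn; omega
      exact aux_coefE hq heps (aux_qFact_ne hq hq2 hm) (aux_qNum_ne hq hq2 (by omega)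
        (by have := Finset.mem_range.mp hn; omega)) x
  -- (1 - s ψ) * F = F2
  have h4 : u * (∑ n ∈ Finset.range (d+1), fI n • ψ ^ n)
      = ∑ n ∈ Finset.range (d+1), fI2 n • ψ ^ n := by
    rw [hu, aux_mul_sum d ψ hψnil s fI]
    refine Finset.sum_congr rfl fun n hn => ?_
    congr 1
    cases n with
    | zero => simp [hfI2, hfI]
    | succ m =>
      simp only [if_neg (Nat.succ_ne_zero m), Nat.add_sub_cancel]
      have hm : m ≤ d := by
        have := Finset.mem_range.mp hn; omega
      exact aux_coefI hq heps (aux_qFact_ne hq hq2 hm) (aux_qNum_ne hq hq2 (by omega)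
        (by have := Finset.mem_range.mp hn; omega)) x
  -- T * E = E2 * T
  have h2 : T * (∑ n ∈ Finset.range (d+1), fE n • ψ ^ n)
      = (∑ n ∈ Finset.range (d+1), fE2 n • ψ ^ n) * T := by
    rw [aux_T_mul_sum d ψ T (q^2) hTψ fE]
    congr 1
    refine Finset.sum_congr rfl fun n _ => ?_
    congr 1
    simp only [hfE, hfE2]
    rw [mul_pow]
    ring
  -- T * F = F2 * T
  have h5 : T * (∑ n ∈ Finset.range (d+1), fI n • ψ ^ n)
      = (∑ n ∈ Finset.range (d+1), fI2 n • ψ ^ n) * T := by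
    rw [aux_T_mul_sum d ψ T (q^2) hTψ fI]
    congr 1
    refine Finset.sum_congr rfl fun n _ => ?_
    congr 1
    simp only [hfI, hfI2]
    have hneg : (-(q^2*x) : 𝕂) = q^2 * (-x) := by ring
    rw [hneg, mul_pow]
    ring
  -- commutation of E with u
  have hcommE : (∑ n ∈ Finset.range (d+1), fE n • ψ ^ n) * u
      = u * (∑ n ∈ Finset.range (d+1), fE n • ψ ^ n) := by
    have hc : Commute ψ (∑ n ∈ Finset.range (d+1), fE n • ψ ^ n) := aux_commute_sum ψ _ _
    have : Commute (∑ n ∈ Finset.range (d+1), fE n • ψ ^ n) u :=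
      (Commute.one_right _).sub_right (hc.symm.smul_right s)
    exact this.eq
  constructor
  · -- T * E = E * (R * T)
    rw [hEeq]
    calc T * (∑ n ∈ Finset.range (d+1), fE n • ψ ^ n)
        = (∑ n ∈ Finset.range (d+1), fE2 n • ψ ^ n) * T := h2
      _ = (Ring.inverse u * (u * (∑ n ∈ Finset.range (d+1), fE2 n • ψ ^ n))) * T := by
          rw [← mul_assoc, hiu, one_mul]
      _ = (Ring.inverse u * (∑ n ∈ Finset.range (d+1), fE n • ψ ^ n)) * T := by rw [h1]
      _ = ((∑ n ∈ Finset.range (d+1), fE n • ψ ^ n) * Ring.inverse u) * T := by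
          rw [aux_comm_inverse huunit hcommE]
      _ = (∑ n ∈ Finset.range (d+1), fE n • ψ ^ n) * (Ring.inverse u * T) := by
          rw [mul_assoc]
  · -- (R * T) * F = F * T
    rw [hFeq]
    calc (Ring.inverse u * T) * (∑ n ∈ Finset.range (d+1), fI n • ψ ^ n)
        = Ring.inverse u * (T * (∑ n ∈ Finset.range (d+1), fI n • ψ ^ n)) := mul_assoc _ _ _
      _ = Ring.inverse u * ((∑ n ∈ Finset.range (d+1), fI2 n • ψ ^ n) * T) := by rw [h5]
      _ = Ring.inverse u * ((u * (∑ n ∈ Finset.range (d+1), fI n • ψ ^ n)) * T) := by rw [h4]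
      _ = (Ring.inverse u * u) * ((∑ n ∈ Finset.range (d+1), fI n • ψ ^ n) * T) := by
          rw [mul_assoc, mul_assoc]
      _ = (∑ n ∈ Finset.range (d+1), fI n • ψ ^ n) * T := by rw [hiu, one_mul]

end AuxOp

theorem stmt_10
    {𝕂 : Type*} [Field 𝕂] {V : Type*} [AddCommGroup V] [Module 𝕂 V]
    [FiniteDimensional 𝕂 V]
    (d : ℕ) (hd : 1 ≤ d) (q a : 𝕂) (hq : q ≠ 0) (ha : a ≠ 0)
    (hq2 : ∀ i : ℕ, 1 ≤ i → i ≤ d → q ^ (2 * i) ≠ 1)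
    (ha2 : ∀ i : ℤ, 1 - (d : ℤ) ≤ i → i ≤ (d : ℤ) - 1 → a ^ 2 ≠ q ^ (2 * i))
    (K : Module.End 𝕂 V) (hK : IsUnit K)
    (U : ℕ → Submodule 𝕂 V)
    (hUne : ∀ i, i ≤ d → U i ≠ ⊥)
    (hUint : DirectSum.IsInternal (fun i : Fin (d + 1) => U i.1))
    (hKU : ∀ i, i ≤ d → ∀ v ∈ U i, K v = (q ^ ((d : ℤ) - 2 * (i : ℤ))) • v)
    (ψ : Module.End 𝕂 V)
    (hψ0 : ∀ v ∈ U 0, ψ v = 0)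
    (hψU : ∀ i, 1 ≤ i → i ≤ d → ∀ v ∈ U i, ψ v ∈ U (i - 1))
    (hψnil : ψ ^ (d + 1) = 0)
    (hKψ : K * ψ = q ^ 2 • (ψ * K))
    (hinv : ∀ x : 𝕂, IsUnit (1 - x • ψ))
    (B : Module.End 𝕂 V)
    (hB : B = (1 - (a * q) • ψ) * Ring.inverse (1 - (a⁻¹ * q) • ψ) * K)
    (M : Module.End 𝕂 V)
    (hM : M = (a - a⁻¹)⁻¹ • (a • K - a⁻¹ • B))
    (hMunit : IsUnit M)
    (Ud : ℕ → Submodule 𝕂 V)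
    (hUdne : ∀ i, i ≤ d → Ud i ≠ ⊥)
    (hUdint : DirectSum.IsInternal (fun i : Fin (d + 1) => Ud i.1))
    (hBUd : ∀ i, i ≤ d → ∀ v ∈ Ud i, B v = (q ^ ((d : ℤ) - 2 * (i : ℤ))) • v)
    (hψ0d : ∀ v ∈ Ud 0, ψ v = 0)
    (hψUd : ∀ i, 1 ≤ i → i ≤ d → ∀ v ∈ Ud i, ψ v ∈ Ud (i - 1)):
    ∀ i, i ≤ d →
      U i = Submodule.map (qExp q (d + 1) ((a⁻¹ / (q - q⁻¹)) • ψ)) (Module.End.eigenspace M (q ^ ((d : ℤ) - 2 * (i : ℤ)))) ∧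
      Ud i = Submodule.map (qExp q (d + 1) ((a / (q - q⁻¹)) • ψ)) (Module.End.eigenspace M (q ^ ((d : ℤ) - 2 * (i : ℤ)))) ∧
      Module.End.eigenspace M (q ^ ((d : ℤ) - 2 * (i : ℤ))) = Submodule.map (qExpInv q (d + 1) (-((a⁻¹ / (q - q⁻¹)) • ψ))) (U i) ∧
      Module.End.eigenspace M (q ^ ((d : ℤ) - 2 * (i : ℤ))) = Submodule.map (qExpInv q (d + 1) (-((a / (q - q⁻¹)) • ψ))) (Ud i) := by
  have heps : q - q⁻¹ ≠ 0 := aux_eps_ne hq hd hq2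
  have haa : a - a⁻¹ ≠ 0 := by
    intro h
    have haa' : a = a⁻¹ := sub_eq_zero.mp h
    apply ha2 0 (by omega) (by omega)
    rw [mul_zero, zpow_zero]
    calc a ^ 2 = a * a := sq a
      _ = a * a⁻¹ := by rw [← haa']
      _ = 1 := mul_inv_cancel₀ ha
  have haa1 : a * a - 1 ≠ 0 := by
    intro h
    apply haa
    have h1 : a * a = 1 := by rwa [sub_eq_zero] at h
    have h2 : a = a⁻¹ := eq_inv_of_mul_eq_one_left h1
    rw [← h2, sub_self]
  have hs1 : (q - q⁻¹) * q * (a⁻¹ / (q - q⁻¹)) = a⁻¹ * q := by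
    rw [div_eq_mul_inv]
    calc (q - q⁻¹) * q * (a⁻¹ * (q - q⁻¹)⁻¹)
        = a⁻¹ * q * ((q - q⁻¹) * (q - q⁻¹)⁻¹) := by ring
      _ = a⁻¹ * q := by rw [mul_inv_cancel₀ heps, mul_one]
  have hs2 : (q - q⁻¹) * q * (a / (q - q⁻¹)) = a * q := by
    rw [div_eq_mul_inv]
    calc (q - q⁻¹) * q * (a * (q - q⁻¹)⁻¹)
        = a * q * ((q - q⁻¹) * (q - q⁻¹)⁻¹) := by ring
      _ = a * q := by rw [mul_inv_cancel₀ heps, mul_one]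
  have hRinv := hinv (a⁻¹ * q)
  have hRinv2 := hinv (a * q)
  have hψcomm : ∀ (y : 𝕂), ψ * (1 - y • ψ) = (1 - y • ψ) * ψ := fun y =>
    (((Commute.one_left ψ).sub_left ((Commute.refl ψ).smul_left y)).symm).eq
  have hψR : ψ * Ring.inverse (1 - (a⁻¹ * q) • ψ) = Ring.inverse (1 - (a⁻¹ * q) • ψ) * ψ :=
    aux_comm_inverse hRinv (hψcomm _)
  have hBψ : B * ψ = q ^ 2 • (ψ * B) := by
    have hXψ : ψ * ((1 - (a*q) • ψ) * Ring.inverse (1 - (a⁻¹*q) • ψ))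
        = ((1 - (a*q) • ψ) * Ring.inverse (1 - (a⁻¹*q) • ψ)) * ψ := by
      rw [← mul_assoc, hψcomm (a*q)]
      rw [mul_assoc, hψR, ← mul_assoc]
    calc B * ψ
        = ((1 - (a*q) • ψ) * Ring.inverse (1 - (a⁻¹*q) • ψ)) * (K * ψ) := by
          rw [hB, mul_assoc]
      _ = ((1 - (a*q) • ψ) * Ring.inverse (1 - (a⁻¹*q) • ψ)) * (q^2 • (ψ * K)) := by rw [hKψ]
      _ = q^2 • ((((1 - (a*q) • ψ) * Ring.inverse (1 - (a⁻¹*q) • ψ)) * ψ) * K) := by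
          rw [mul_smul_comm]
          simp only [mul_assoc]
      _ = q^2 • ((ψ * ((1 - (a*q) • ψ) * Ring.inverse (1 - (a⁻¹*q) • ψ))) * K) := by
          rw [hXψ]
      _ = q^2 • (ψ * B) := by rw [hB, mul_assoc]
  have hcomm12 : (1 - (a⁻¹*q) • ψ) * (1 - (a*q) • ψ) = (1 - (a*q) • ψ) * (1 - (a⁻¹*q) • ψ) := by
    have hAψ : Commute ((1 : Module.End 𝕂 V) - (a⁻¹*q) • ψ) ψ :=
      (Commute.one_left ψ).sub_left ((Commute.refl ψ).smul_left _)
    exact ((Commute.one_right _).sub_right (hAψ.smul_right _)).eq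
  have hKB : (1 - (a⁻¹*q) • ψ) * B = (1 - (a*q) • ψ) * K := by
    rw [hB, ← mul_assoc, ← mul_assoc, hcomm12, mul_assoc (1 - (a*q) • ψ),
      Ring.mul_inverse_cancel _ hRinv, mul_one]
  have hMK : (1 - (a⁻¹*q) • ψ) * M = K := by
    rw [hM, mul_smul_comm, mul_sub, mul_smul_comm, mul_smul_comm, hKB]
    have e1 : (1 - (a⁻¹*q) • ψ) * K = K - (a⁻¹*q) • (ψ*K) := by
      rw [sub_mul, one_mul, smul_mul_assoc]
    have e2 : (1 - (a*q) • ψ) * K = K - (a*q) • (ψ*K) := by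
      rw [sub_mul, one_mul, smul_mul_assoc]
    rw [e1, e2]
    match_scalars
    · field_simp
      exact div_self (by rw [sq]; exact haa1)
    · field_simp
      ring
  have hMeq : M = Ring.inverse (1 - (a⁻¹ * q) • ψ) * K := by
    rw [← hMK, ← mul_assoc, Ring.inverse_mul_cancel _ hRinv, one_mul]
  have hMB : M = Ring.inverse (1 - (a * q) • ψ) * B := by
    have hBM : (1 - (a * q) • ψ) * M = B := by
      rw [hMeq, hB, mul_assoc]
    rw [← hBM, ← mul_assoc, Ring.inverse_mul_cancel _ hRinv2, one_mul]
  -- conjugation relations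
  obtain ⟨hKE, hMF1⟩ := aux_conj hd hq hq2 ψ K hψnil hKψ hinv (a⁻¹ / (q - q⁻¹))
  rw [hs1, ← hMeq] at hKE hMF1
  obtain ⟨hBE, hMF2⟩ := aux_conj hd hq hq2 ψ B hψnil hBψ hinv (a / (q - q⁻¹))
  rw [hs2, ← hMB] at hBE hMF2
  -- units
  have hE1u : IsUnit (qExp q (d+1) ((a⁻¹ / (q - q⁻¹)) • ψ)) := aux_qExp_unit q _ ψ hψnil
  have hE2u : IsUnit (qExp q (d+1) ((a / (q - q⁻¹)) • ψ)) := aux_qExp_unit q _ ψ hψnil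
  have hF1u : IsUnit (qExpInv q (d+1) (-((a⁻¹ / (q - q⁻¹)) • ψ))) := aux_qExpInv_unit q _ ψ hψnil
  have hF2u : IsUnit (qExpInv q (d+1) (-((a / (q - q⁻¹)) • ψ))) := aux_qExpInv_unit q _ ψ hψnil
  -- eigenvalue injectivity
  have hlinj : Function.Injective (fun j : Fin (d+1) => q ^ ((d:ℤ) - 2 * (j.1:ℤ))) := by
    have key : ∀ i j : Fin (d+1), j.1 < i.1 →
        q ^ ((d:ℤ) - 2*(i.1:ℤ)) ≠ q ^ ((d:ℤ) - 2*(j.1:ℤ)) := by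
      intro i j hlt heq
      apply hq2 (i.1 - j.1) (by omega) (by omega)
      have h2 : q ^ ((d:ℤ) - 2*(j.1:ℤ)) / q ^ ((d:ℤ) - 2*(i.1:ℤ)) = 1 := by
        rw [← heq, div_self (zpow_ne_zero _ hq)]
      rw [← zpow_sub₀ hq] at h2
      have h3 : ((d:ℤ) - 2*(j.1:ℤ)) - ((d:ℤ) - 2*(i.1:ℤ)) = ((2 * (i.1 - j.1) : ℕ) : ℤ) := by
        push_cast; omega
      rw [h3, zpow_natCast] at h2
      exact h2
    intro i j heq
    simp only at heq
    rcases lt_trichotomy i.1 j.1 with h | h | h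
    · exact absurd heq.symm (key j i h)
    · exact Fin.ext h
    · exact absurd heq (key i j h)
  -- independence of eigenspace families
  have hindM : iSupIndep (fun j : Fin (d+1) =>
      Module.End.eigenspace M (q ^ ((d:ℤ) - 2*(j.1:ℤ)))) :=
    (Module.End.eigenspaces_iSupIndep M).comp hlinj
  have hindK : iSupIndep (fun j : Fin (d+1) =>
      Module.End.eigenspace K (q ^ ((d:ℤ) - 2*(j.1:ℤ)))) :=
    (Module.End.eigenspaces_iSupIndep K).comp hlinj
  have hindB : iSupIndep (fun j : Fin (d+1) =>
      Module.End.eigenspace B (q ^ ((d:ℤ) - 2*(j.1:ℤ)))) :=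
    (Module.End.eigenspaces_iSupIndep B).comp hlinj
  -- transport of eigenvectors
  have hmap : ∀ (A G C : Module.End 𝕂 V), A * G = G * C → ∀ (μ : 𝕂) (W : Submodule 𝕂 V),
      (∀ v ∈ W, C v = μ • v) → Submodule.map G W ≤ Module.End.eigenspace A μ := by
    intro A G C hAG μ W hW
    rintro _ ⟨w, hw, rfl⟩
    rw [Module.End.mem_eigenspace_iff]
    have h0 : (A * G) w = (G * C) w := by rw [hAG]
    simp only [Module.End.mul_apply] at h0
    rw [h0, hW w hw, map_smul]
  -- mapping top to top
  have hmaptop : ∀ (G : Module.End 𝕂 V), IsUnit G → ∀ (W : Fin (d+1) → Submodule 𝕂 V),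
      (⨆ j, W j) = ⊤ → (⨆ j, Submodule.map G (W j)) = ⊤ := by
    intro G hG W hW
    rw [← Submodule.map_iSup, hW, Submodule.map_top, LinearMap.range_eq_top]
    exact ((Module.End.isUnit_iff G).mp hG).surjective
  have hUtop : (⨆ j : Fin (d+1), U j.1) = ⊤ := hUint.submodule_iSup_eq_top
  have hUdtop : (⨆ j : Fin (d+1), Ud j.1) = ⊤ := hUdint.submodule_iSup_eq_top
  -- U j = eigenspace K
  have hUK : ∀ j : Fin (d+1), U j.1 = Module.End.eigenspace K (q ^ ((d:ℤ) - 2*(j.1:ℤ))) := by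
    refine aux_family_eq _ _ hindK (fun j => ?_) hUtop
    intro v hv
    rw [Module.End.mem_eigenspace_iff]
    exact hKU j.1 (by omega) v hv
  have hUdB : ∀ j : Fin (d+1), Ud j.1 = Module.End.eigenspace B (q ^ ((d:ℤ) - 2*(j.1:ℤ))) := by
    refine aux_family_eq _ _ hindB (fun j => ?_) hUdtop
    intro v hv
    rw [Module.End.mem_eigenspace_iff]
    exact hBUd j.1 (by omega) v hv
  -- Step 3 : map F₁ (U j) = eigenspace M
  have hS3 : ∀ j : Fin (d+1),
      Submodule.map (qExpInv q (d+1) (-((a⁻¹ / (q - q⁻¹)) • ψ))) (U j.1)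
        = Module.End.eigenspace M (q ^ ((d:ℤ) - 2*(j.1:ℤ))) := by
    refine aux_family_eq _ _ hindM (fun j => ?_) (hmaptop _ hF1u _ hUtop)
    exact hmap M _ K hMF1 _ _ (fun v hv => hKU j.1 (by omega) v hv)
  have hS4 : ∀ j : Fin (d+1),
      Submodule.map (qExpInv q (d+1) (-((a / (q - q⁻¹)) • ψ))) (Ud j.1)
        = Module.End.eigenspace M (q ^ ((d:ℤ) - 2*(j.1:ℤ))) := by
    refine aux_family_eq _ _ hindM (fun j => ?_) (hmaptop _ hF2u _ hUdtop)
    exact hmap M _ B hMF2 _ _ (fun v hv => hBUd j.1 (by omega) v hv)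
  -- eigenspaces of M fill the space
  have hMtop : (⨆ j : Fin (d+1),
      Module.End.eigenspace M (q ^ ((d:ℤ) - 2*(j.1:ℤ)))) = ⊤ := by
    rw [← hmaptop _ hF1u _ hUtop]
    exact iSup_congr fun j => (hS3 j).symm
  -- Step 1 : map E₁ (eigenspace M) = U j
  have hS1 : ∀ j : Fin (d+1),
      Submodule.map (qExp q (d+1) ((a⁻¹ / (q - q⁻¹)) • ψ))
        (Module.End.eigenspace M (q ^ ((d:ℤ) - 2*(j.1:ℤ)))) = U j.1 := by
    intro j
    rw [hUK j]
    refine aux_family_eq _ _ hindK (fun j' => ?_) (hmaptop _ hE1u _ hMtop) j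
    exact hmap K _ M hKE _ _ (fun v hv => Module.End.mem_eigenspace_iff.mp hv)
  have hS2 : ∀ j : Fin (d+1),
      Submodule.map (qExp q (d+1) ((a / (q - q⁻¹)) • ψ))
        (Module.End.eigenspace M (q ^ ((d:ℤ) - 2*(j.1:ℤ)))) = Ud j.1 := by
    intro j
    rw [hUdB j]
    refine aux_family_eq _ _ hindB (fun j' => ?_) (hmaptop _ hE2u _ hMtop) j
    exact hmap B _ M hBE _ _ (fun v hv => Module.End.mem_eigenspace_iff.mp hv)
  -- conclusion
  intro i hi
  exact ⟨(hS1 ⟨i, by omega⟩).symm, (hS2 ⟨i, by omega⟩).symm,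
    (hS3 ⟨i, by omega⟩).symm, (hS4 ⟨i, by omega⟩).symm⟩
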